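/- Let p ≥ 2 and let H = K₂ ∨ K̄ₚ be the complete split graph on n = p + 2 vertices obtained by joining every vertex of a complete graph K₂ to every vertex of an edgeless graph on p vertices. Then the two largest signless Laplacian eigenvalues of H are q₁(H) = (n + 2 + √(n² + 4n − 12))/2 and q₂(H) = n − 2, and consequently q₁(H) + q₂(H) > d₁(H) + d₂(H) + 1, where d₁(H) ≥ d₂(H) are the two largest vertex degrees of H. -/

import Mathlib

open Matrix

/-- The signless Laplacian matrix `Q(G) = D + A` of a simple graph, over `ℝ`. -/
def sLapMatrix {m : ℕ} (G : SimpleGraph (Fin m)) [DecidableRel G.Adj] :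
    Matrix (Fin m) (Fin m) ℝ :=
  G.degMatrix ℝ + G.adjMatrix ℝ

/-- `q` lists the eigenvalues of `A` (with multiplicity) in non-increasing order. -/
def IsEigSeq {m : ℕ} (A : Matrix (Fin m) (Fin m) ℝ) (q : Fin m → ℝ) : Prop :=
  Antitone q ∧ ∃ (hA : A.IsHermitian) (σ : Equiv.Perm (Fin m)),
    ∀ i, q i = hA.eigenvalues (σ i)

/-- `d` lists the degrees of `G` (with multiplicity) in non-increasing order. -/
def IsDegSeq {m : ℕ} (G : SimpleGraph (Fin m)) [DecidableRel G.Adj] (d : Fin m → ℕ) : Prop :=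
  Antitone d ∧ ∃ σ : Equiv.Perm (Fin m), ∀ i, d i = G.degree (σ i)

/-- The complete split graph `K₂ ∨ K̄ₚ` on `p + 2` vertices: vertices `0` and `1` form the
complete part and are joined to everything; the remaining `p` vertices are independent. -/
def completeSplit (p : ℕ) : SimpleGraph (Fin (p + 2)) where
  Adj a b := a ≠ b ∧ (a.val ≤ 1 ∨ b.val ≤ 1)
  symm := by constructor; intro a b h; exact ⟨h.1.symm, by tauto⟩
  loopless := by constructor; intro a h; exact h.1 rfl

instance completeSplit.adjDecidable (p : ℕ) : DecidableRel (completeSplit p).Adj := fun a b =>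
  inferInstanceAs (Decidable (a ≠ b ∧ (a.val ≤ 1 ∨ b.val ≤ 1)))


open Polynomial

lemma completeSplit_adj {p : ℕ} (a b : Fin (p+2)) :
    (completeSplit p).Adj a b ↔ a ≠ b ∧ (a.val ≤ 1 ∨ b.val ≤ 1) := Iff.rfl

lemma completeSplit_nbr_le1 {p : ℕ} (i : Fin (p+2)) (hi : i.val ≤ 1) :
    (completeSplit p).neighborFinset i = Finset.univ.erase i := by
  ext b
  simp only [SimpleGraph.mem_neighborFinset, completeSplit_adj, Finset.mem_erase,
    Finset.mem_univ, and_true]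
  constructor
  · rintro ⟨h, -⟩; exact h.symm
  · intro h; exact ⟨Ne.symm h, Or.inl hi⟩

lemma completeSplit_nbr_ge2 {p : ℕ} (i : Fin (p+2)) (hi : ¬ i.val ≤ 1) :
    (completeSplit p).neighborFinset i = {⟨0, by omega⟩, ⟨1, by omega⟩} := by
  ext b
  simp only [SimpleGraph.mem_neighborFinset, completeSplit_adj, Finset.mem_insert,
    Finset.mem_singleton, Fin.ext_iff, Fin.val_ne_iff]
  constructor
  · rintro ⟨h1, h2 | h2⟩
    · omega
    · omega
  · intro h
    refine ⟨by omega, Or.inr (by omega)⟩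

lemma completeSplit_degree {p : ℕ} (i : Fin (p+2)) :
    (completeSplit p).degree i = if i.val ≤ 1 then p + 1 else 2 := by
  rw [SimpleGraph.degree]
  split_ifs with hi
  · rw [completeSplit_nbr_le1 i hi, Finset.card_erase_of_mem (Finset.mem_univ i),
      Finset.card_univ, Fintype.card_fin]
    omega
  · rw [completeSplit_nbr_ge2 i hi]
    rw [Finset.card_insert_of_notMem (by simp [Fin.ext_iff]), Finset.card_singleton]

lemma sLap_mulVec {p : ℕ} (x : Fin (p+2) → ℝ) (i : Fin (p+2)) :
    (sLapMatrix (completeSplit p) *ᵥ x) i =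
      ((completeSplit p).degree i : ℝ) * x i +
        ∑ u ∈ (completeSplit p).neighborFinset i, x u := by
  rw [sLapMatrix, add_mulVec, Pi.add_apply, SimpleGraph.degMatrix_mulVec_apply,
    SimpleGraph.adjMatrix_mulVec_apply]

lemma nbr_sum_le1 {p : ℕ} (x : Fin (p+2) → ℝ) (i : Fin (p+2)) (hi : i.val ≤ 1) :
    ∑ u ∈ (completeSplit p).neighborFinset i, x u = (∑ u, x u) - x i := by
  rw [completeSplit_nbr_le1 i hi, Finset.sum_erase_eq_sub (Finset.mem_univ i)]

lemma nbr_sum_ge2 {p : ℕ} (x : Fin (p+2) → ℝ) (i : Fin (p+2)) (hi : ¬ i.val ≤ 1) :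
    ∑ u ∈ (completeSplit p).neighborFinset i, x u = x ⟨0, by omega⟩ + x ⟨1, by omega⟩ := by
  rw [completeSplit_nbr_ge2 i hi, Finset.sum_pair (by simp [Fin.ext_iff])]

lemma card_le1 {p : ℕ} : (Finset.univ.filter (fun u : Fin (p+2) => u.val ≤ 1)).card = 2 := by
  have : (Finset.univ.filter (fun u : Fin (p+2) => u.val ≤ 1)) =
      {⟨0, by omega⟩, ⟨1, by omega⟩} := by
    ext u
    simp only [Finset.mem_filter, Finset.mem_univ, true_and, Finset.mem_insert,
      Finset.mem_singleton, Fin.ext_iff]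
    omega
  rw [this, Finset.card_insert_of_notMem (by simp [Fin.ext_iff]), Finset.card_singleton]

lemma sum_ite_le1 {p : ℕ} (a b : ℝ) :
    ∑ u : Fin (p+2), (if u.val ≤ 1 then a else b) = 2*a + p*b := by
  classical
  rw [Finset.sum_ite, Finset.sum_const, Finset.sum_const, card_le1]
  have h2 : (Finset.univ.filter (fun u : Fin (p+2) => ¬ u.val ≤ 1)).card = p := by
    have := Finset.card_filter_add_card_filter_not
      (s := (Finset.univ : Finset (Fin (p+2)))) (p := fun u : Fin (p+2) => u.val ≤ 1)
    rw [card_le1, Finset.card_univ, Fintype.card_fin] at this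
    omega
  rw [h2]
  push_cast
  ring

lemma sum_col2 {p : ℕ} :
    ∑ u : Fin (p+2), (if u.val = 0 then (1:ℝ) else if u.val = 1 then -1 else 0) = 0 := by
  have h : ∀ u : Fin (p+2), (if u.val = 0 then (1:ℝ) else if u.val = 1 then -1 else 0) =
      (if u = ⟨0, by omega⟩ then (1:ℝ) else 0) + (if u = ⟨1, by omega⟩ then (-1:ℝ) else 0) := by
    intro u
    split_ifs <;> simp only [Fin.ext_iff] at * <;> norm_num <;> omega
  rw [Finset.sum_congr rfl (fun u _ => h u), Finset.sum_add_distrib]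
  rw [Finset.sum_ite_eq', Finset.sum_ite_eq']
  simp

lemma sum_colj {p : ℕ} (j : Fin (p+2)) (hj : 3 ≤ j.val) :
    ∑ u : Fin (p+2), (if u.val = 2 then (1:ℝ) else if u = j then -1 else 0) = 0 := by
  have h : ∀ u : Fin (p+2), (if u.val = 2 then (1:ℝ) else if u = j then -1 else 0) =
      (if u = ⟨2, by omega⟩ then (1:ℝ) else 0) + (if u = j then (-1:ℝ) else 0) := by
    intro u
    split_ifs <;> simp_all [Fin.ext_iff] <;> omega
  rw [Finset.sum_congr rfl (fun u _ => h u), Finset.sum_add_distrib]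
  simp

noncomputable def lamP (p : ℕ) : ℝ := ((p:ℝ) + 4 + Real.sqrt ((p:ℝ)^2 + 8*p)) / 2
noncomputable def lamM (p : ℕ) : ℝ := ((p:ℝ) + 4 - Real.sqrt ((p:ℝ)^2 + 8*p)) / 2

lemma sq_sqrt8p (p : ℕ) : Real.sqrt ((p:ℝ)^2 + 8*p) ^ 2 = (p:ℝ)^2 + 8*p :=
  Real.sq_sqrt (by positivity)

lemma lamP_quad (p : ℕ) : lamP p ^ 2 - ((p:ℝ) + 4) * lamP p + 4 = 0 := by
  have h := sq_sqrt8p p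
  unfold lamP
  linear_combination h / 4

lemma lamM_quad (p : ℕ) : lamM p ^ 2 - ((p:ℝ) + 4) * lamM p + 4 = 0 := by
  have h := sq_sqrt8p p
  unfold lamM
  linear_combination h / 4

lemma sqrt_gt8p {p : ℕ} (hp : 2 ≤ p) : (p:ℝ) + 2 < Real.sqrt ((p:ℝ)^2 + 8*p) := by
  have hp' : (2:ℝ) ≤ p := by exact_mod_cast hp
  rw [show ((p:ℝ) + 2) = Real.sqrt (((p:ℝ)+2)^2) by rw [Real.sqrt_sq (by linarith)]]
  apply Real.sqrt_lt_sqrt (by positivity)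
  nlinarith

lemma lamP_gt {p : ℕ} (hp : 2 ≤ p) : (p:ℝ) + 3 < lamP p := by
  have := sqrt_gt8p hp
  unfold lamP
  linarith

lemma lamM_lt_two {p : ℕ} (hp : 2 ≤ p) : lamM p < 2 := by
  have := sqrt_gt8p hp
  unfold lamM
  linarith

lemma lamM_pos (p : ℕ) : 0 < lamM p := by
  have h : Real.sqrt ((p:ℝ)^2 + 8*p) < (p:ℝ) + 4 := by
    rw [show ((p:ℝ) + 4) = Real.sqrt (((p:ℝ)+4)^2) by rw [Real.sqrt_sq (by positivity)]]
    apply Real.sqrt_lt_sqrt (by positivity)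
    nlinarith
  unfold lamM
  linarith

noncomputable def dvec (p : ℕ) : Fin (p+2) → ℝ := fun j =>
  if j.val = 0 then lamP p else if j.val = 1 then lamM p
  else if j.val = 2 then (p:ℝ) else 2

noncomputable def col0 (p : ℕ) : Fin (p+2) → ℝ := fun i => if i.val ≤ 1 then lamP p - 2 else 2
noncomputable def col1 (p : ℕ) : Fin (p+2) → ℝ := fun i => if i.val ≤ 1 then lamM p - 2 else 2
def col2 (p : ℕ) : Fin (p+2) → ℝ := fun i => if i.val = 0 then 1 else if i.val = 1 then -1 else 0
def col3 (p : ℕ) (j : Fin (p+2)) : Fin (p+2) → ℝ :=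
  fun i => if i.val = 2 then 1 else if i = j then -1 else 0

lemma eig0 (p : ℕ) : sLapMatrix (completeSplit p) *ᵥ col0 p = lamP p • col0 p := by
  funext i
  rw [Pi.smul_apply, smul_eq_mul, sLap_mulVec, completeSplit_degree]
  by_cases hi : i.val ≤ 1
  · rw [if_pos hi, nbr_sum_le1 _ i hi]
    unfold col0
    rw [sum_ite_le1, if_pos hi]
    push_cast
    linear_combination -lamP_quad p
  · rw [if_neg hi, nbr_sum_ge2 _ i hi]
    unfold col0
    rw [if_neg hi, if_pos (by norm_num : (0:ℕ) ≤ 1), if_pos (by norm_num : (1:ℕ) ≤ 1)]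
    push_cast
    ring

lemma eig1 (p : ℕ) : sLapMatrix (completeSplit p) *ᵥ col1 p = lamM p • col1 p := by
  funext i
  rw [Pi.smul_apply, smul_eq_mul, sLap_mulVec, completeSplit_degree]
  by_cases hi : i.val ≤ 1
  · rw [if_pos hi, nbr_sum_le1 _ i hi]
    unfold col1
    rw [sum_ite_le1, if_pos hi]
    push_cast
    linear_combination -lamM_quad p
  · rw [if_neg hi, nbr_sum_ge2 _ i hi]
    unfold col1
    rw [if_neg hi, if_pos (by norm_num : (0:ℕ) ≤ 1), if_pos (by norm_num : (1:ℕ) ≤ 1)]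
    push_cast
    ring

lemma eig2 (p : ℕ) : sLapMatrix (completeSplit p) *ᵥ col2 p = (p : ℝ) • col2 p := by
  funext i
  rw [Pi.smul_apply, smul_eq_mul, sLap_mulVec, completeSplit_degree]
  by_cases hi0 : i.val = 0
  · rw [if_pos (by omega : i.val ≤ 1), nbr_sum_le1 _ i (by omega)]
    unfold col2
    rw [sum_col2, if_pos hi0]
    push_cast
    ring
  · by_cases hi1 : i.val = 1
    · rw [if_pos (by omega : i.val ≤ 1), nbr_sum_le1 _ i (by omega)]
      unfold col2
      rw [sum_col2, if_neg hi0, if_pos hi1]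
      push_cast
      ring
    · rw [if_neg (by omega : ¬ i.val ≤ 1), nbr_sum_ge2 _ i (by omega)]
      unfold col2
      rw [if_neg hi0, if_neg hi1, if_pos rfl, if_neg (by norm_num : ¬ (1:ℕ) = 0),
        if_pos rfl]
      ring

lemma eig3 (p : ℕ) (j : Fin (p+2)) (hj : 3 ≤ j.val) :
    sLapMatrix (completeSplit p) *ᵥ col3 p j = (2 : ℝ) • col3 p j := by
  funext i
  rw [Pi.smul_apply, smul_eq_mul, sLap_mulVec, completeSplit_degree]
  by_cases hi : i.val ≤ 1
  · rw [if_pos hi, nbr_sum_le1 _ i hi]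
    unfold col3
    rw [sum_colj j hj, if_neg (by omega : ¬ i.val = 2),
      if_neg (by rw [Fin.ext_iff]; omega : ¬ i = j)]
    ring
  · rw [if_neg hi, nbr_sum_ge2 _ i hi]
    unfold col3
    rw [show ((⟨0, by omega⟩ : Fin (p+2)).val) = 0 from rfl,
      show ((⟨1, by omega⟩ : Fin (p+2)).val) = 1 from rfl]
    rw [if_neg (by norm_num : ¬ (0:ℕ) = 2), if_neg (by simp only [Fin.ext_iff]; omega :
        ¬ (⟨0, by omega⟩ : Fin (p+2)) = j),
      if_neg (by norm_num : ¬ (1:ℕ) = 2), if_neg (by simp only [Fin.ext_iff]; omega :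
        ¬ (⟨1, by omega⟩ : Fin (p+2)) = j)]
    ring

noncomputable def Pcol (p : ℕ) (j : Fin (p+2)) : Fin (p+2) → ℝ :=
  if j.val = 0 then col0 p else if j.val = 1 then col1 p
  else if j.val = 2 then col2 p else col3 p j

noncomputable def Pmat (p : ℕ) : Matrix (Fin (p+2)) (Fin (p+2)) ℝ :=
  Matrix.of fun i j => Pcol p j i

lemma eigencol (p : ℕ) (j : Fin (p+2)) :
    sLapMatrix (completeSplit p) *ᵥ Pcol p j = dvec p j • Pcol p j := by
  unfold Pcol dvec
  split_ifs with h0 h1 h2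
  · exact eig0 p
  · exact eig1 p
  · exact eig2 p
  · exact eig3 p j (by omega)

lemma hQP (p : ℕ) :
    sLapMatrix (completeSplit p) * Pmat p = Pmat p * diagonal (dvec p) := by
  ext i j
  have h := congrFun (eigencol p j) i
  rw [Matrix.mul_diagonal]
  rw [show (sLapMatrix (completeSplit p) * Pmat p) i j
      = (sLapMatrix (completeSplit p) *ᵥ Pcol p j) i from rfl, h,
    Pi.smul_apply, smul_eq_mul, mul_comm]
  rfl

lemma sum_split3 {p : ℕ} (hp : 1 ≤ p) (f : Fin (p+2) → ℝ) :
    ∑ j, f j = f ⟨0, by omega⟩ + f ⟨1, by omega⟩ + f ⟨2, by omega⟩ +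
      ∑ j ∈ Finset.univ.filter (fun j : Fin (p+2) => 3 ≤ j.val), f j := by
  set T := Finset.univ.filter (fun j : Fin (p+2) => 3 ≤ j.val) with hTdef
  have h2T : (⟨2, by omega⟩ : Fin (p+2)) ∉ T := by simp [hTdef]
  have h1T : (⟨1, by omega⟩ : Fin (p+2)) ∉ insert (⟨2, by omega⟩ : Fin (p+2)) T := by
    simp [hTdef, Fin.ext_iff]
  have h0T : (⟨0, by omega⟩ : Fin (p+2)) ∉
      insert (⟨1, by omega⟩ : Fin (p+2)) (insert (⟨2, by omega⟩ : Fin (p+2)) T) := by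
    simp [hTdef, Fin.ext_iff]
  have huniv : (Finset.univ : Finset (Fin (p+2))) = insert ⟨0, by omega⟩ (insert ⟨1, by omega⟩
      (insert ⟨2, by omega⟩ T)) := by
    ext u
    simp only [hTdef, Finset.mem_univ, Finset.mem_insert, Finset.mem_filter, true_and, true_iff,
      Fin.ext_iff]
    omega
  conv_lhs => rw [show ∑ j, f j = ∑ j ∈ (Finset.univ : Finset (Fin (p+2))), f j from rfl, huniv]
  rw [Finset.sum_insert h0T, Finset.sum_insert h1T, Finset.sum_insert h2T]
  ring

lemma cardT {p : ℕ} (hp : 1 ≤ p) :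
    (Finset.univ.filter (fun j : Fin (p+2) => 3 ≤ j.val)).card = p - 1 := by
  have h1 : (Finset.univ.filter (fun j : Fin (p+2) => ¬ 3 ≤ j.val)) =
      {⟨0, by omega⟩, ⟨1, by omega⟩, ⟨2, by omega⟩} := by
    ext u
    simp only [Finset.mem_filter, Finset.mem_univ, true_and, Finset.mem_insert,
      Finset.mem_singleton, Fin.ext_iff]
    omega
  have h2 := Finset.card_filter_add_card_filter_not
    (s := (Finset.univ : Finset (Fin (p+2)))) (fun j : Fin (p+2) => 3 ≤ j.val)
  rw [h1, Finset.card_univ, Fintype.card_fin] at h2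
  have h3 : ({⟨0, by omega⟩, ⟨1, by omega⟩, ⟨2, by omega⟩} :
      Finset (Fin (p+2))).card = 3 := by
    rw [Finset.card_insert_of_notMem (by simp [Fin.ext_iff]),
      Finset.card_insert_of_notMem (by simp [Fin.ext_iff]), Finset.card_singleton]
  omega

lemma Pcol0 {p : ℕ} : Pcol p ⟨0, by omega⟩ = col0 p := if_pos rfl
lemma Pcol1 {p : ℕ} : Pcol p ⟨1, by omega⟩ = col1 p := by
  unfold Pcol; norm_num
lemma Pcol2 {p : ℕ} (hp : 1 ≤ p) : Pcol p ⟨2, by omega⟩ = col2 p := by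
  unfold Pcol; norm_num
lemma Pcol3 {p : ℕ} (j : Fin (p+2)) (hj : 3 ≤ j.val) : Pcol p j = col3 p j := by
  unfold Pcol
  rw [if_neg (by omega), if_neg (by omega), if_neg (by omega)]

lemma Pmat_inj {p : ℕ} (hp : 2 ≤ p) : Function.Injective (Pmat p).mulVec := by
  have hs := sqrt_gt8p hp
  set i0 : Fin (p+2) := ⟨0, by omega⟩
  set i1 : Fin (p+2) := ⟨1, by omega⟩
  set i2 : Fin (p+2) := ⟨2, by omega⟩
  set T := Finset.univ.filter (fun j : Fin (p+2) => 3 ≤ j.val) with hTdef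
  suffices h0 : ∀ z, Pmat p *ᵥ z = 0 → z = 0 by
    intro x y hxy
    have := h0 (x - y) (by rw [Matrix.mulVec_sub, hxy, sub_self])
    exact sub_eq_zero.mp this
  intro z hz
  have hrow : ∀ i, ∑ j, Pcol p j i * z j = 0 := by
    intro i
    have h := congrFun hz i
    rwa [Matrix.mulVec, dotProduct] at h
  have key : ∀ i, col0 p i * z i0 + col1 p i * z i1 + col2 p i * z i2 +
      ∑ j ∈ T, col3 p j i * z j = 0 := by
    intro i
    have h := hrow i
    rw [sum_split3 (by omega) (fun j => Pcol p j i * z j)] at h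
    rw [Pcol0, Pcol1, Pcol2 (by omega)] at h
    rwa [Finset.sum_congr rfl (fun j hj => by
      rw [Pcol3 j (by simpa [hTdef] using hj)])] at h
  have eq0 := key i0
  have eq1 := key i1
  have eq2 := key i2
  rw [show col0 p i0 = lamP p - 2 from if_pos (by norm_num), show col1 p i0 = lamM p - 2
      from if_pos (by norm_num), show col2 p i0 = 1 from if_pos rfl,
    Finset.sum_congr rfl (fun j hj => by
      rw [show col3 p j i0 = 0 from by
        unfold col3
        rw [if_neg (by norm_num), if_neg (by
          simp only [Fin.ext_iff, i0]
          have := (Finset.mem_filter.mp hj).2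
          omega)], zero_mul]),
    Finset.sum_const_zero] at eq0
  rw [show col0 p i1 = lamP p - 2 from if_pos (by norm_num), show col1 p i1 = lamM p - 2
      from if_pos (by norm_num), show col2 p i1 = -1 from by
        unfold col2; norm_num,
    Finset.sum_congr rfl (fun j hj => by
      rw [show col3 p j i1 = 0 from by
        unfold col3
        rw [if_neg (by norm_num), if_neg (by
          simp only [Fin.ext_iff, i1]
          have := (Finset.mem_filter.mp hj).2
          omega)], zero_mul]),
    Finset.sum_const_zero] at eq1
  rw [show col0 p i2 = 2 from if_neg (by norm_num), show col1 p i2 = 2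
      from if_neg (by norm_num), show col2 p i2 = 0 from by
        unfold col2; norm_num,
    Finset.sum_congr rfl (fun j hj => by
      rw [show col3 p j i2 = 1 from if_pos rfl, one_mul])] at eq2
  have eqT : ∀ i, i ∈ T → 2 * z i0 + 2 * z i1 - z i = 0 := by
    intro i hi
    have hival : 3 ≤ i.val := by simpa [hTdef] using hi
    have h := key i
    rw [show col0 p i = 2 from if_neg (by omega), show col1 p i = 2 from if_neg (by omega),
      show col2 p i = 0 from by unfold col2; rw [if_neg (by omega), if_neg (by omega)]] at h
    rw [Finset.sum_congr rfl (fun j hj => by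
        show col3 p j i * z j = if i = j then -z j else 0
        unfold col3
        rw [if_neg (by omega : ¬ i.val = 2)]
        split_ifs <;> ring),
      Finset.sum_ite_eq T i (fun j => -z j), if_pos hi] at h
    linarith
  have hsumT : ∑ j ∈ T, z j = (p - 1 : ℝ) * (2 * z i0 + 2 * z i1) := by
    rw [Finset.sum_congr rfl (fun j hj => by
      have := eqT j hj
      linarith : ∀ j ∈ T, z j = 2 * z i0 + 2 * z i1)]
    rw [Finset.sum_const, cardT (by omega), nsmul_eq_mul]
    congr 1
    have : (1:ℕ) ≤ p := by omega
    push_cast [Nat.cast_sub this]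
    ring
  rw [hsumT] at eq2
  have hppos : (0:ℝ) < p := by exact_mod_cast (by omega : 0 < p)
  have h2p : (p:ℝ) * (2 * z i0 + 2 * z i1) = 0 := by nlinarith [eq2]
  have hz01 : z i1 = -z i0 := by
    rcases mul_eq_zero.mp h2p with h | h
    · linarith
    · linarith
  have hz2 : z i2 = 0 := by linarith [eq0, eq1]
  have key2 : (lamP p - lamM p) * z i0 = 0 := by
    linear_combination eq0/2 + eq1/2 + (2 - lamM p) * hz01
  have hL : lamP p - lamM p > 0 := by
    unfold lamP lamM
    linarith
  have hz0 : z i0 = 0 := by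
    rcases mul_eq_zero.mp key2 with h | h
    · linarith
    · exact h
  have hz1 : z i1 = 0 := by rw [hz01, hz0, neg_zero]
  funext i
  show z i = 0
  by_cases h0 : i.val = 0
  · rw [show i = i0 from Fin.ext h0]; exact hz0
  · by_cases h1 : i.val = 1
    · rw [show i = i1 from Fin.ext h1]; exact hz1
    · by_cases h2 : i.val = 2
      · rw [show i = i2 from Fin.ext h2]; exact hz2
      · have hiT : i ∈ T := by simp [hTdef]; omega
        have := eqT i hiT
        rw [hz0, hz1] at this
        linarith
lemma charpoly_conj' {n R : Type*} [Fintype n] [DecidableEq n] [CommRing R]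
    (P P' B : Matrix n n R) (h1 : P * P' = 1) :
    (P * B * P').charpoly = B.charpoly := by
  have hc : charmatrix (P * B * P') = P.map C * charmatrix B * P'.map C := by
    rw [charmatrix, charmatrix]
    simp only [RingHom.mapMatrix_apply]
    rw [mul_sub, sub_mul]
    congr 1
    · have hcomm := (scalar_commute (n := n) (X : R[X]) (fun r => Commute.all _ _) (P.map C)).eq
      rw [← hcomm, mul_assoc, ← Matrix.map_mul, h1]
      simp
    · rw [← Matrix.map_mul, ← Matrix.map_mul]
  have hdet : (P.map (C : R →+* R[X])).det * (P'.map C).det = 1 := by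
    rw [← det_mul, ← Matrix.map_mul, h1]
    simp
  rw [Matrix.charpoly, hc, det_mul, det_mul, Matrix.charpoly]
  rw [mul_comm, ← mul_assoc, mul_comm ((P'.map C).det), hdet, one_mul]

lemma charpoly_diagonal' {n R : Type*} [Fintype n] [DecidableEq n] [LinearOrder n] [CommRing R] (d : n → R) :
    (diagonal d).charpoly = ∏ i, (X - C (d i)) := by
  rw [charpoly_of_upperTriangular _ (blockTriangular_diagonal d)]
  simp

lemma herm_charpoly {n : Type*} [Fintype n] [DecidableEq n] [LinearOrder n] {A : Matrix n n ℝ}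
    (hA : A.IsHermitian) : A.charpoly = ∏ i, (X - C (hA.eigenvalues i)) := by
  have hU : (hA.eigenvectorUnitary : Matrix n n ℝ) * (star hA.eigenvectorUnitary : Matrix n n ℝ) = 1 := by
    exact (Matrix.mem_unitaryGroup_iff).mp hA.eigenvectorUnitary.2
  have := hA.spectral_theorem
  conv_lhs => rw [this]
  rw [Unitary.conjStarAlgAut_apply]
  rw [charpoly_conj' _ _ _ hU]
  have : (RCLike.ofReal ∘ hA.eigenvalues : n → ℝ) = hA.eigenvalues := by
    ext i; simp
  rw [this, charpoly_diagonal']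

lemma multiset_of_prod_eq {n : Type*} [Fintype n] (a b : n → ℝ)
    (h : ∏ i, (X - C (a i)) = ∏ i, (X - C (b i))) :
    Finset.univ.val.map a = Finset.univ.val.map b := by
  have ha : ∏ i, (X - C (a i)) = ((Finset.univ.val.map a).map fun x => X - C x).prod := by
    rw [Multiset.map_map, Finset.prod_eq_multiset_prod]; rfl
  have hb : ∏ i, (X - C (b i)) = ((Finset.univ.val.map b).map fun x => X - C x).prod := by
    rw [Multiset.map_map, Finset.prod_eq_multiset_prod]; rfl
  have := congrArg Polynomial.roots (ha ▸ hb ▸ h)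
  rwa [Polynomial.roots_multiset_prod_X_sub_C, Polynomial.roots_multiset_prod_X_sub_C] at this

lemma charpolyQ {p : ℕ} (hp : 2 ≤ p) :
    (sLapMatrix (completeSplit p)).charpoly = ∏ i, (X - C (dvec p i)) := by
  have hinj := Pmat_inj hp
  have hunit : IsUnit (Pmat p) := Matrix.mulVec_injective_iff_isUnit.mp hinj
  have hdet : IsUnit (Pmat p).det := (Matrix.isUnit_iff_isUnit_det _).mp hunit
  have h1 : Pmat p * (Pmat p)⁻¹ = 1 := Matrix.mul_nonsing_inv _ hdet
  have hQ : sLapMatrix (completeSplit p) = Pmat p * diagonal (dvec p) * (Pmat p)⁻¹ := by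
    calc sLapMatrix (completeSplit p)
        = sLapMatrix (completeSplit p) * (Pmat p * (Pmat p)⁻¹) := by rw [h1, mul_one]
      _ = (sLapMatrix (completeSplit p) * Pmat p) * (Pmat p)⁻¹ := by rw [mul_assoc]
      _ = Pmat p * diagonal (dvec p) * (Pmat p)⁻¹ := by rw [hQP p]
  rw [hQ, charpoly_conj' _ _ _ h1, charpoly_diagonal']


theorem completeSplit_eigs_and_sum_gt {p : ℕ} (hp : 2 ≤ p)
    (q : Fin (p + 2) → ℝ) (hq : IsEigSeq (sLapMatrix (completeSplit p)) q)
    (d : Fin (p + 2) → ℕ) (hd : IsDegSeq (completeSplit p) d) :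
    q ⟨0, by omega⟩ =
      ((p + 2 : ℝ) + 2 + Real.sqrt ((p + 2 : ℝ) ^ 2 + 4 * (p + 2 : ℝ) - 12)) / 2 ∧
    q ⟨1, by omega⟩ = (p + 2 : ℝ) - 2 ∧
    q ⟨0, by omega⟩ + q ⟨1, by omega⟩ >
      (d ⟨0, by omega⟩ : ℝ) + (d ⟨1, by omega⟩ : ℝ) + 1 := by
  obtain ⟨hqanti, hA, σ, hqeq⟩ := hq
  obtain ⟨hdanti, τ, hdeq⟩ := hd
  set i0 : Fin (p+2) := ⟨0, by omega⟩ with hi0def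
  set i1 : Fin (p+2) := ⟨1, by omega⟩ with hi1def
  set i2 : Fin (p+2) := ⟨2, by omega⟩ with hi2def
  have hp' : (2:ℝ) ≤ p := by exact_mod_cast hp
  have hlamPgt := lamP_gt hp
  have hlamMlt := lamM_lt_two hp
  have hlamMpos := lamM_pos p
  -- multiset identity
  have heigs : Finset.univ.val.map hA.eigenvalues = Finset.univ.val.map (dvec p) := by
    apply multiset_of_prod_eq
    rw [← herm_charpoly hA, charpolyQ hp]
  have hqperm : Finset.univ.val.map q = Finset.univ.val.map hA.eigenvalues := by
    have h1 : Finset.univ.val.map q =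
        (Finset.univ.val.map (σ : Fin (p+2) → Fin (p+2))).map hA.eigenvalues := by
      rw [Multiset.map_map]
      exact Multiset.map_congr rfl (fun i _ => hqeq i)
    have h2 : Finset.univ.val.map (σ : Fin (p+2) → Fin (p+2)) = Finset.univ.val := by
      have := Finset.map_univ_equiv (σ : Fin (p+2) ≃ Fin (p+2))
      calc Finset.univ.val.map (σ : Fin (p+2) → Fin (p+2))
          = (Finset.univ.map (σ : Fin (p+2) ≃ Fin (p+2)).toEmbedding).val := by
            rw [Finset.map_val]; rfl
        _ = Finset.univ.val := by rw [this]
    rw [h1, h2]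
  have hmulti : Finset.univ.val.map q = Finset.univ.val.map (dvec p) := by
    rw [hqperm, heigs]
  -- facts about dvec values
  have hvals : ∀ r ∈ Finset.univ.val.map (dvec p), r = lamP p ∨ r ≤ (p:ℝ) := by
    intro r hr
    obtain ⟨i, _, rfl⟩ := Multiset.mem_map.mp hr
    unfold dvec
    split_ifs
    · exact Or.inl rfl
    · exact Or.inr (by linarith)
    · exact Or.inr le_rfl
    · exact Or.inr (by linarith)
  have hmemP : lamP p ∈ Finset.univ.val.map (dvec p) := by
    refine Multiset.mem_map.mpr ⟨i0, Finset.mem_val.mpr (Finset.mem_univ _), ?_⟩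
    unfold dvec
    norm_num [hi0def]
  have hmemp : (p:ℝ) ∈ Finset.univ.val.map (dvec p) := by
    refine Multiset.mem_map.mpr ⟨i2, Finset.mem_val.mpr (Finset.mem_univ _), ?_⟩
    unfold dvec
    norm_num [hi2def]
  have hqmem : ∀ i, q i ∈ Finset.univ.val.map (dvec p) := fun i => by
    rw [← hmulti]
    exact Multiset.mem_map.mpr ⟨i, Finset.mem_val.mpr (Finset.mem_univ _), rfl⟩
  -- q i0 = lamP
  have hq0 : q i0 = lamP p := by
    obtain ⟨i, _, hi⟩ := Multiset.mem_map.mp (hmulti ▸ hmemP)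
    have hle : q i ≤ q i0 := hqanti (by simp [hi0def, Fin.le_def])
    rcases hvals _ (hqmem i0) with h | h
    · exact h
    · linarith [hi ▸ hle]
  -- count of lamP is one
  have hcnt : Multiset.count (lamP p) (Finset.univ.val.map (dvec p)) = 1 := by
    rw [Multiset.count_map]
    have hfilt : Finset.univ.val.filter (fun a => lamP p = dvec p a) =
        (Finset.univ.filter (fun a => lamP p = dvec p a)).val := by
      rw [Finset.filter_val]
    rw [hfilt]
    have : Finset.univ.filter (fun a => lamP p = dvec p a) = {i0} := by
      ext a
      simp only [Finset.mem_filter, Finset.mem_univ, true_and, Finset.mem_singleton]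
      constructor
      · intro h
        unfold dvec at h
        split_ifs at h with h0 h1 h2
        · exact Fin.ext (by simp [hi0def, h0])
        · exact absurd h (by unfold lamP lamM at *; intro hh; nlinarith [sqrt_gt8p hp])
        · exact absurd h (by linarith)
        · exact absurd h (by linarith)
      · rintro rfl
        unfold dvec
        norm_num [hi0def]
    rw [this]
    rfl
  have hq1ne : q i1 ≠ lamP p := by
    intro hq1
    have hsub : ({i0, i1} : Finset (Fin (p+2))) ⊆
        Finset.univ.filter (fun a => lamP p = q a) := by
      intro a ha
      rcases Finset.mem_insert.mp ha with rfl | ha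
      · exact Finset.mem_filter.mpr ⟨Finset.mem_univ _, hq0.symm⟩
      · rw [Finset.mem_singleton.mp ha]
        exact Finset.mem_filter.mpr ⟨Finset.mem_univ _, hq1.symm⟩
    have hcard : 2 ≤ (Finset.univ.filter (fun a => lamP p = q a)).card := by
      have := Finset.card_le_card hsub
      rwa [Finset.card_insert_of_notMem (by simp [hi0def, hi1def, Fin.ext_iff]),
        Finset.card_singleton] at this
    have hcnt2 : Multiset.count (lamP p) (Finset.univ.val.map q) = 1 := by
      rw [hmulti]; exact hcnt
    rw [Multiset.count_map] at hcnt2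
    have : Finset.univ.val.filter (fun a => lamP p = q a) =
        (Finset.univ.filter (fun a => lamP p = q a)).val := by rw [Finset.filter_val]
    rw [this] at hcnt2
    have : (Finset.univ.filter (fun a => lamP p = q a)).card = 1 := hcnt2
    omega
  have hq1 : q i1 = (p:ℝ) := by
    have hle : q i1 ≤ (p:ℝ) := by
      rcases hvals _ (hqmem i1) with h | h
      · exact absurd h hq1ne
      · exact h
    obtain ⟨j, _, hj⟩ := Multiset.mem_map.mp (hmulti ▸ hmemp)
    have hjne : j ≠ i0 := by
      intro h
      rw [h, hq0] at hj
      linarith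
    have h1j : i1 ≤ j := by
      rw [Fin.le_def]
      simp only [hi1def]
      have : j.val ≠ 0 := fun hc => hjne (Fin.ext (by simp [hi0def, hc]))
      omega
    have := hqanti h1j
    rw [hj] at this
    linarith
  -- degrees
  have hdegle : ∀ v, (completeSplit p).degree v ≤ p + 1 := by
    intro v
    rw [completeSplit_degree]
    split_ifs <;> omega
  have hdeg0 : (completeSplit p).degree i0 = p + 1 := by
    rw [completeSplit_degree]
    norm_num [hi0def]
  have hdeg1 : (completeSplit p).degree i1 = p + 1 := by
    rw [completeSplit_degree]
    norm_num [hi1def]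
  have hd0le : d i0 ≤ p + 1 := by rw [hdeq]; apply hdegle
  set a : Fin (p+2) := τ⁻¹ i0
  set b : Fin (p+2) := τ⁻¹ i1
  have hda : d a = p + 1 := by rw [hdeq]; rw [show τ (τ⁻¹ i0) = i0 from τ.apply_symm_apply i0]; exact hdeg0
  have hdb : d b = p + 1 := by rw [hdeq]; rw [show τ (τ⁻¹ i1) = i1 from τ.apply_symm_apply i1]; exact hdeg1
  have hab : a ≠ b := by
    simp only [a, b, ne_eq, EmbeddingLike.apply_eq_iff_eq]
    simp [hi0def, hi1def, Fin.ext_iff]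
  have hc : ∃ c, c ≠ i0 ∧ d c = p + 1 := by
    by_cases h : a = i0
    · refine ⟨b, ?_, hdb⟩
      intro hb
      exact hab (h.trans hb.symm)
    · exact ⟨a, h, hda⟩
  obtain ⟨c, hcne, hdc⟩ := hc
  have h1c : i1 ≤ c := by
    rw [Fin.le_def]
    simp only [hi1def]
    have : c.val ≠ 0 := fun hc0 => hcne (Fin.ext (by simp [hi0def, hc0]))
    omega
  have hd1ge : p + 1 ≤ d i1 := hdc ▸ hdanti h1c
  have hd1le : d i1 ≤ d i0 := hdanti (by simp [hi0def, hi1def, Fin.le_def])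
  have hd0 : d i0 = p + 1 := by omega
  have hd1 : d i1 = p + 1 := by omega
  refine ⟨?_, ?_, ?_⟩
  · rw [hq0]
    unfold lamP
    rw [show ((p:ℝ) + 2) ^ 2 + 4 * ((p:ℝ) + 2) - 12 = (p:ℝ)^2 + 8*p by ring]
    ring
  · rw [hq1]; ring
  · rw [hq0, hq1, hd0, hd1]
    push_cast
    linarith
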